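/- arXiv:1609.00885 — 3 statements merged into one kernel-verified Lean document; each statement's English description precedes it below -/
import Mathlib

section
/- Negative moment bound for inverse subordinators: Let S be a strictly increasing subordinator whose Bernstein function φ satisfies φ(r) ≤ c r^σ for all r>0, for some constants c>0, σ>0, and let S^{-1}(t) := inf{s≥0 : S(s)>t}. Then for every θ∈(0,1) and every t>0, E[(S^{-1}(t))^{−θ}] ≤ (1/(1−θ)) [2cΓ(σ+1)]^θ t^{−σθ}. -/
open MeasureTheory ProbabilityTheory Real Set Filter Topology

noncomputable section

/-- A subordinator with characteristic (Bernstein) exponent `φ`: a non-decreasing Lévy process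
`S` on `[0,∞)` with `S(0) = 0` and Laplace transform `E e^{−r S(t)} = e^{−t φ(r)}`. -/
structure IsSubordinator {Ω : Type*} [MeasurableSpace Ω] (μ : Measure Ω)
    (S : ℝ → Ω → ℝ) (φ : ℝ → ℝ) : Prop where
  measurable : ∀ t, Measurable (S t)
  zero : ∀ ω, S 0 ω = 0
  mono : ∀ ω, MonotoneOn (fun t => S t ω) (Set.Ici 0)
  nonneg : ∀ ω, ∀ t ≥ (0:ℝ), 0 ≤ S t ω
  indep_incr : ∀ (n : ℕ) (t : Fin (n + 1) → ℝ), Monotone t → (∀ i, 0 ≤ t i) →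
    iIndepFun
      (fun i : Fin n => fun ω => S (t i.succ) ω - S (t i.castSucc) ω) μ
  stat_incr : ∀ s t : ℝ, 0 ≤ s → 0 ≤ t →
    Measure.map (fun ω => S (s + t) ω - S s ω) μ = Measure.map (S t) μ
  laplace : ∀ r t : ℝ, 0 < r → 0 ≤ t →
    ∫ ω, Real.exp (-(r * S t ω)) ∂μ = Real.exp (-(t * φ r))

lemma exists_good_u (σ : ℝ) (hσ : 0 < σ) :
    ∃ u : ℝ, 0 < u ∧ u ^ σ ≤ 2 * Real.Gamma (σ + 1) * (1 - Real.exp (-u)) := by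
  by_contra hcon
  push_neg at hcon
  have hΓpos : 0 < Real.Gamma (σ + 1) := Real.Gamma_pos_of_pos (by linarith)
  set f : ℝ → ℝ := fun u => Real.exp (-u) * u ^ σ with hf
  set g : ℝ → ℝ := fun u => 2 * Real.Gamma (σ + 1) * ((1 - Real.exp (-u)) * Real.exp (-u)) with hg
  have hfint : IntegrableOn f (Ioi 0) := by
    have := Real.GammaIntegral_convergent (show (0:ℝ) < σ + 1 by linarith)
    simpa [hf] using this
  have hgint0 : IntegrableOn (fun u => (1 - Real.exp (-u)) * Real.exp (-u)) (Ioi 0) := by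
    have h1 : IntegrableOn (fun u : ℝ => Real.exp (-u)) (Ioi 0) := by
      simpa using exp_neg_integrableOn_Ioi 0 (by norm_num : (0:ℝ) < 1)
    have h2 : IntegrableOn (fun u : ℝ => Real.exp (-(2*u))) (Ioi 0) := by
      simpa [neg_mul] using exp_neg_integrableOn_Ioi 0 (by norm_num : (0:ℝ) < 2)
    have : (fun u : ℝ => (1 - Real.exp (-u)) * Real.exp (-u))
        = fun u : ℝ => Real.exp (-u) - Real.exp (-(2*u)) := by
      funext u
      rw [sub_mul, one_mul, ← Real.exp_add]
      ring_nf
    rw [this]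
    exact h1.sub h2
  have hgint : IntegrableOn g (Ioi 0) := hgint0.const_mul _
  have hfval : ∫ u in Ioi 0, f u = Real.Gamma (σ + 1) := by
    rw [Real.Gamma_eq_integral (show (0:ℝ) < σ + 1 by linarith)]
    norm_num [hf]
  have hexp2 : ∫ u in Ioi (0:ℝ), Real.exp (-(2*u)) = 1/2 := by
    have := integral_comp_mul_left_Ioi (fun x : ℝ => Real.exp (-x)) 0 (show (0:ℝ) < 2 by norm_num)
    simp only [mul_zero] at this
    rw [this, integral_exp_neg_Ioi_zero]
    norm_num
  have hgval : ∫ u in Ioi 0, g u = Real.Gamma (σ + 1) := by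
    have hsplit : ∫ u in Ioi (0:ℝ), (1 - Real.exp (-u)) * Real.exp (-u) = 1/2 := by
      have heq : (fun u : ℝ => (1 - Real.exp (-u)) * Real.exp (-u))
          = fun u : ℝ => Real.exp (-u) - Real.exp (-(2*u)) := by
        funext u
        rw [sub_mul, one_mul, ← Real.exp_add]
        ring_nf
      rw [heq, integral_sub, integral_exp_neg_Ioi_zero, hexp2]
      · norm_num
      · have := exp_neg_integrableOn_Ioi 0 (by norm_num : (0:ℝ) < 1); simp at this; exact this
      · have := exp_neg_integrableOn_Ioi 0 (by norm_num : (0:ℝ) < 2); simp [neg_mul] at this; exact this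
    rw [hg]
    rw [integral_const_mul, hsplit]
    ring
  have hle : ∀ u ∈ Ioi (0:ℝ), g u < f u := by
    intro u hu
    have h := hcon u hu
    have he : 0 < Real.exp (-u) := Real.exp_pos _
    have := mul_lt_mul_of_pos_right h he
    calc g u = (2 * Real.Gamma (σ + 1) * (1 - Real.exp (-u))) * Real.exp (-u) := by
          rw [hg]; ring
    _ < u ^ σ * Real.exp (-u) := this
    _ = f u := by rw [hf]; ring
  -- strict positivity on (1,2)
  have hcont : ContinuousOn (fun u => f u - g u) (uIcc (1:ℝ) 2) := by
    have h1 : ContinuousOn f (uIcc (1:ℝ) 2) := by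
      apply ContinuousOn.mul
      · exact (Real.continuous_exp.comp continuous_neg).continuousOn
      · apply ContinuousOn.rpow_const continuousOn_id
        intro x hx
        left
        rw [uIcc_of_le (by norm_num : (1:ℝ) ≤ 2)] at hx
        exact ne_of_gt (lt_of_lt_of_le zero_lt_one hx.1)
    have h2 : ContinuousOn g (uIcc (1:ℝ) 2) := by
      apply ContinuousOn.mul continuousOn_const
      exact (((continuous_const.sub (Real.continuous_exp.comp continuous_neg)).mul
        (Real.continuous_exp.comp continuous_neg))).continuousOn
    exact h1.sub h2
  have hpos : 0 < ∫ u in Ioc (1:ℝ) 2, (f u - g u) := by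
    have := intervalIntegral.intervalIntegral_pos_of_pos_on
      (f := fun u => f u - g u) (a := 1) (b := 2)
      (hcont.intervalIntegrable)
      (fun x hx => sub_pos.mpr (hle x (lt_trans zero_lt_one hx.1)))
      (by norm_num)
    rwa [intervalIntegral.integral_of_le (by norm_num : (1:ℝ) ≤ 2)] at this
  have hmono : ∫ u in Ioc (1:ℝ) 2, (f u - g u) ≤ ∫ u in Ioi (0:ℝ), (f u - g u) := by
    apply setIntegral_mono_set (hfint.sub hgint)
    · filter_upwards [ae_restrict_mem measurableSet_Ioi] with x hx
      exact sub_nonneg.mpr (le_of_lt (hle x hx))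
    · exact HasSubset.Subset.eventuallyLE (fun x hx => lt_trans zero_lt_one hx.1)
  have hzero : ∫ u in Ioi (0:ℝ), (f u - g u) = 0 := by
    rw [integral_sub hfint hgint, hfval, hgval]
    ring
  rw [hzero] at hmono
  linarith


lemma measurable_inv_sub {Ω : Type*} [MeasurableSpace Ω] (S : ℝ → Ω → ℝ)
    (hm : ∀ t, Measurable (S t)) (hmono : ∀ ω, MonotoneOn (fun t => S t ω) (Set.Ici 0))
    (t : ℝ) :
    Measurable (fun ω => sInf {s : ℝ | 0 ≤ s ∧ t < S s ω}) := by
  apply measurable_of_Iio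
  intro q
  have hkey : (fun ω => sInf {s : ℝ | 0 ≤ s ∧ t < S s ω}) ⁻¹' (Iio q) =
      (⋃ (s : ℚ), ⋃ (_ : 0 ≤ (s:ℝ) ∧ (s:ℝ) < q), {ω | t < S s ω}) ∪
      ({ω | ∀ s : ℚ, 0 ≤ (s:ℝ) → S s ω ≤ t} ∩ {ω | 0 < q}) := by
    ext ω
    simp only [mem_preimage, mem_Iio, mem_union, mem_iUnion, mem_inter_iff, mem_setOf_eq,
      exists_prop]
    constructor
    · intro hq
      by_cases hA : {s : ℝ | 0 ≤ s ∧ t < S s ω}.Nonempty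
      · left
        have hbdd : BddBelow {s : ℝ | 0 ≤ s ∧ t < S s ω} := ⟨0, fun x hx => hx.1⟩
        obtain ⟨s, hs, hsq⟩ := (csInf_lt_iff hbdd hA).mp hq
        obtain ⟨s', hs'1, hs'2⟩ := exists_rat_btwn hsq
        refine ⟨s', ⟨le_trans hs.1 hs'1.le, hs'2⟩, ?_⟩
        exact lt_of_lt_of_le hs.2 (hmono ω hs.1 (le_trans hs.1 hs'1.le) hs'1.le)
      · right
        rw [not_nonempty_iff_eq_empty] at hA
        constructor
        · intro s hs
          by_contra hc
          push_neg at hc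
          have hmem : ((s:ℝ)) ∈ {s : ℝ | 0 ≤ s ∧ t < S s ω} := ⟨hs, hc⟩
          rw [hA] at hmem
          exact notMem_empty _ hmem
        · rw [hA, Real.sInf_empty] at hq
          exact hq
    · rintro (⟨s, ⟨hs0, hsq⟩, hts⟩ | ⟨hall, hq0⟩)
      · have hbdd : BddBelow {s : ℝ | 0 ≤ s ∧ t < S s ω} := ⟨0, fun x hx => hx.1⟩
        exact lt_of_le_of_lt (csInf_le hbdd ⟨hs0, hts⟩) hsq
      · have hA : {s : ℝ | 0 ≤ s ∧ t < S s ω} = ∅ := by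
          rw [eq_empty_iff_forall_notMem]
          rintro s ⟨hs0, hts⟩
          obtain ⟨s', hs'⟩ := exists_rat_gt s
          have : S s ω ≤ S s' ω := hmono ω hs0 (le_trans hs0 hs'.le) hs'.le
          exact absurd (le_trans this (hall s' (le_trans hs0 hs'.le))) (not_le.mpr hts)
        rw [hA, Real.sInf_empty]
        exact hq0
  rw [hkey]
  apply MeasurableSet.union
  · exact MeasurableSet.iUnion fun s => MeasurableSet.iUnion fun _ =>
      measurableSet_lt measurable_const (hm s)
  · apply MeasurableSet.inter
    · have : {ω | ∀ s : ℚ, 0 ≤ (s:ℝ) → S s ω ≤ t} = ⋂ (s : ℚ), ⋂ (_ : 0 ≤ (s:ℝ)), {ω | S s ω ≤ t} := by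
        ext ω; simp
      rw [this]
      exact MeasurableSet.iInter fun s => MeasurableSet.iInter fun _ =>
        measurableSet_le (hm s) measurable_const
    · by_cases h : 0 < q
      · simp [h]
      · simp [h]

/-- **Negative moment bound for inverse subordinators** (Lemma 3.6): if `S` is a strictly
increasing subordinator whose Bernstein function `φ` satisfies `φ(r) ≤ c r^σ` for all `r>0`,
then for every `θ ∈ (0,1)` and `t>0`,
`E[(S^{-1}(t))^{−θ}] ≤ (1/(1−θ)) [2cΓ(σ+1)]^θ t^{−σθ}`,
where `S^{-1}(t) = inf{s ≥ 0 : S(s) > t}`. -/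
theorem negative_moment_inverse_subordinator
    {Ω : Type*} [MeasurableSpace Ω] (μ : Measure Ω) [IsProbabilityMeasure μ]
    (S : ℝ → Ω → ℝ) (φ : ℝ → ℝ) (hsub : IsSubordinator μ S φ)
    (hstrict : ∀ᵐ ω ∂μ, StrictMonoOn (fun t => S t ω) (Set.Ici 0))
    (c σ : ℝ) (hc : 0 < c) (hσ : 0 < σ) (hφ : ∀ r > (0:ℝ), φ r ≤ c * r ^ σ)
    (θ : ℝ) (hθ : θ ∈ Set.Ioo (0:ℝ) 1) (t : ℝ) (ht : 0 < t) :
    ∫⁻ ω, ENNReal.ofReal ((sInf {s : ℝ | 0 ≤ s ∧ t < S s ω}) ^ (-θ)) ∂μ ≤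
      ENNReal.ofReal ((1 / (1 - θ)) * (2 * c * Real.Gamma (σ + 1)) ^ θ *
        t ^ (-(σ * θ))) := by
  obtain ⟨hθ0, hθ1⟩ := hθ
  have hθ1' : 0 < 1 - θ := by linarith
  set T : Ω → ℝ := fun ω => sInf {s : ℝ | 0 ≤ s ∧ t < S s ω} with hT
  have hΓpos : 0 < Real.Gamma (σ + 1) := Real.Gamma_pos_of_pos (by linarith)
  set K : ℝ := 2 * c * Real.Gamma (σ + 1) * t ^ (-σ) with hK
  have htσ : 0 < t ^ (-σ) := Real.rpow_pos_of_pos ht _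
  have hKpos : 0 < K := by positivity
  have hTnn : ∀ ω, 0 ≤ T ω := by
    intro ω
    by_cases hA : {s : ℝ | 0 ≤ s ∧ t < S s ω}.Nonempty
    · exact le_csInf hA fun x hx => hx.1
    · rw [hT]
      simp only [not_nonempty_iff_eq_empty.mp hA, Real.sInf_empty]
      exact le_refl 0
  -- tail bound
  obtain ⟨u, hu, hule⟩ := exists_good_u σ hσ
  have tail : ∀ r : ℝ, 0 < r → μ {ω | t ≤ S r ω} ≤ ENNReal.ofReal (K * r) := by
    intro r hr
    set lam : ℝ := u / t with hlam
    have hlam0 : 0 < lam := div_pos hu ht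
    have hlamt : lam * t = u := div_mul_cancel₀ u ht.ne'
    set ε : ℝ := 1 - Real.exp (-u) with hε
    have hε0 : 0 < ε := by
      rw [hε, sub_pos]
      exact Real.exp_lt_one_iff.mpr (by linarith)
    have hSm : Measurable (fun ω => Real.exp (-(lam * S r ω))) :=
      (((hsub.measurable r).const_mul lam).neg).exp
    have hbd : ∀ ω, Real.exp (-(lam * S r ω)) ∈ Set.Icc (0:ℝ) 1 := by
      intro ω
      refine ⟨(Real.exp_pos _).le, Real.exp_le_one_iff.mpr ?_⟩
      have := hsub.nonneg ω r hr.le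
      nlinarith
    have hintExp : Integrable (fun ω => Real.exp (-(lam * S r ω))) μ := by
      refine (integrable_const (1:ℝ)).mono' hSm.aestronglyMeasurable ?_
      filter_upwards with ω
      rw [Real.norm_eq_abs, abs_of_nonneg (hbd ω).1]
      exact (hbd ω).2
    have hint : Integrable (fun ω => 1 - Real.exp (-(lam * S r ω))) μ :=
      (integrable_const (1:ℝ)).sub hintExp
    have hval : ∫ ω, (1 - Real.exp (-(lam * S r ω))) ∂μ = 1 - Real.exp (-(r * φ lam)) := by
      rw [integral_sub (integrable_const 1) hintExp, integral_const, probReal_univ,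
        hsub.laplace lam r hlam0 hr.le]
      simp
    have hnn : 0 ≤ᵐ[μ] fun ω => 1 - Real.exp (-(lam * S r ω)) := by
      filter_upwards with ω
      have := (hbd ω).2
      simp only [Pi.zero_apply]
      linarith
    have markov := mul_meas_ge_le_integral_of_nonneg hnn hint ε
    rw [hval] at markov
    have hss : {ω | t ≤ S r ω} ⊆ {ω | ε ≤ 1 - Real.exp (-(lam * S r ω))} := by
      intro ω hω
      simp only [mem_setOf_eq] at hω ⊢
      have h1 : Real.exp (-(lam * S r ω)) ≤ Real.exp (-(lam * t)) := by
        apply Real.exp_le_exp.mpr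
        have : lam * t ≤ lam * S r ω := mul_le_mul_of_nonneg_left hω hlam0.le
        linarith
      rw [hε, ← hlamt]
      linarith
    have h1 : ε * (μ {ω | t ≤ S r ω}).toReal ≤ 1 - Real.exp (-(r * φ lam)) := by
      refine le_trans ?_ markov
      apply mul_le_mul_of_nonneg_left _ hε0.le
      exact ENNReal.toReal_mono (measure_ne_top _ _) (measure_mono hss)
    have h2 : 1 - Real.exp (-(r * φ lam)) ≤ r * φ lam := by
      have := Real.add_one_le_exp (-(r * φ lam))
      linarith
    have h3 : φ lam ≤ c * lam ^ σ := hφ lam hlam0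
    have hKε : c * lam ^ σ ≤ K * ε := by
      have hlamσ : lam ^ σ = u ^ σ * t ^ (-σ) := by
        rw [hlam, Real.div_rpow hu.le ht.le, Real.rpow_neg ht.le, div_eq_mul_inv]
      rw [hlamσ, hK]
      calc c * (u ^ σ * t ^ (-σ))
          ≤ c * ((2 * Real.Gamma (σ + 1) * ε) * t ^ (-σ)) := by
            apply mul_le_mul_of_nonneg_left
              (mul_le_mul_of_nonneg_right hule htσ.le) hc.le
        _ = 2 * c * Real.Gamma (σ + 1) * t ^ (-σ) * ε := by ring
    have hchain : ε * (μ {ω | t ≤ S r ω}).toReal ≤ ε * (K * r) := by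
      calc ε * (μ {ω | t ≤ S r ω}).toReal
          ≤ 1 - Real.exp (-(r * φ lam)) := h1
        _ ≤ r * φ lam := h2
        _ ≤ r * (c * lam ^ σ) := by
            apply mul_le_mul_of_nonneg_left h3 hr.le
        _ ≤ r * (K * ε) := mul_le_mul_of_nonneg_left hKε hr.le
        _ = ε * (K * r) := by ring
    have hfin : (μ {ω | t ≤ S r ω}).toReal ≤ K * r :=
      le_of_mul_le_mul_left hchain hε0
    calc μ {ω | t ≤ S r ω}
        = ENNReal.ofReal ((μ {ω | t ≤ S r ω}).toReal) :=
          (ENNReal.ofReal_toReal (measure_ne_top _ _)).symm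
      _ ≤ ENNReal.ofReal (K * r) := ENNReal.ofReal_le_ofReal hfin
  -- layer cake
  have hmeasT : Measurable T := measurable_inv_sub S hsub.measurable hsub.mono t
  have hmeasf : Measurable (fun ω => T ω ^ (-θ)) := hmeasT.pow measurable_const
  have layer : ∫⁻ ω, ENNReal.ofReal (T ω ^ (-θ)) ∂μ
      = ∫⁻ x in Ioi 0, μ {ω | x < T ω ^ (-θ)} := by
    exact lintegral_eq_lintegral_meas_lt μ
      (Filter.Eventually.of_forall fun ω => Real.rpow_nonneg (hTnn ω) _)
      hmeasf.aemeasurable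
  -- pointwise tail comparison
  have step1 : ∀ x : ℝ, x ∈ Ioi (0:ℝ) →
      μ {ω | x < T ω ^ (-θ)} ≤ min 1 (ENNReal.ofReal (K * x ^ (-θ⁻¹))) := by
    intro x hx
    rw [mem_Ioi] at hx
    refine le_min prob_le_one ?_
    have hr : (0:ℝ) < x ^ (-θ⁻¹) := Real.rpow_pos_of_pos hx _
    refine le_trans (measure_mono ?_) (tail _ hr)
    intro ω hω
    simp only [mem_setOf_eq] at hω ⊢
    have hT0 : 0 < T ω := by
      rcases (hTnn ω).lt_or_eq with h | h
      · exact h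
      · exfalso
        rw [← h, Real.zero_rpow (neg_ne_zero.mpr hθ0.ne')] at hω
        exact absurd hω (not_lt.mpr hx.le)
    have hTr : T ω < x ^ (-θ⁻¹) := by
      have h2 : (T ω ^ (-θ)) ^ (-θ⁻¹) < x ^ (-θ⁻¹) :=
        Real.rpow_lt_rpow_of_neg hx hω (by simp [hθ0.le]; positivity)
      rwa [← Real.rpow_mul (hTnn ω), show (-θ) * (-θ⁻¹) = 1 by
        field_simp, Real.rpow_one] at h2
    have hA : {s : ℝ | 0 ≤ s ∧ t < S s ω}.Nonempty := by
      by_contra hA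
      rw [not_nonempty_iff_eq_empty] at hA
      have : T ω = 0 := by rw [hT]; simp only [hA, Real.sInf_empty]
      exact absurd this hT0.ne'
    obtain ⟨s, hs, hsr⟩ := (csInf_lt_iff ⟨0, fun y hy => hy.1⟩ hA).mp hTr
    exact le_of_lt (lt_of_lt_of_le hs.2
      (hsub.mono ω hs.1 (le_trans hs.1 hsr.le) hsr.le))
  -- putting things together
  set a : ℝ := K ^ θ with ha
  have hapos : 0 < a := Real.rpow_pos_of_pos hKpos θ
  have hplt : -θ⁻¹ < -1 := by
    rw [neg_lt_neg_iff]
    exact (one_lt_inv_iff₀).mpr ⟨hθ0, hθ1⟩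
  have hintOn : IntegrableOn (fun x : ℝ => K * x ^ (-θ⁻¹)) (Ioi a) := by
    exact (integrableOn_Ioi_rpow_of_lt hplt hapos).const_mul K
  have hval2 : ∫ x in Ioi a, K * x ^ (-θ⁻¹) = K ^ θ * (θ / (1 - θ)) := by
    rw [integral_const_mul, integral_Ioi_rpow_of_lt hplt hapos]
    have hap : a ^ (-θ⁻¹ + 1) = K ^ (θ - 1) := by
      rw [ha, ← Real.rpow_mul hKpos.le]
      congr 1
      field_simp
      ring
    rw [hap]
    have hKθ : K * K ^ (θ - 1) = K ^ θ := by
      nth_rewrite 1 [← Real.rpow_one K]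
      rw [← Real.rpow_add hKpos]
      norm_num
    have hre : K * (-a ^ (-θ⁻¹ + 1) / (-θ⁻¹ + 1)) = -(K * K ^ (θ - 1)) / (-θ⁻¹ + 1) := by
      rw [hap]; ring
    rw [show K * (-K ^ (θ - 1) / (-θ⁻¹ + 1)) = -(K * K ^ (θ - 1)) / (-θ⁻¹ + 1) by ring,
      hKθ]
    rw [div_eq_iff (by
      intro hzero
      have : θ⁻¹ = 1 := by linarith
      have : θ = 1 := by
        field_simp at this
        linarith
      linarith)]
    field_simp
    ring
  have h1θ : (1:ℝ) - θ ≠ 0 := hθ1'.ne'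
  calc ∫⁻ ω, ENNReal.ofReal ((sInf {s : ℝ | 0 ≤ s ∧ t < S s ω}) ^ (-θ)) ∂μ
      = ∫⁻ x in Ioi 0, μ {ω | x < T ω ^ (-θ)} := layer
    _ ≤ ∫⁻ x in Ioi 0, min 1 (ENNReal.ofReal (K * x ^ (-θ⁻¹))) := by
        refine lintegral_mono_ae ?_
        rw [ae_restrict_iff' measurableSet_Ioi]
        exact Filter.Eventually.of_forall step1
    _ = (∫⁻ x in Ioc 0 a, min 1 (ENNReal.ofReal (K * x ^ (-θ⁻¹)))) +
        ∫⁻ x in Ioi a, min 1 (ENNReal.ofReal (K * x ^ (-θ⁻¹))) := by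
        rw [← lintegral_union measurableSet_Ioi (Ioc_disjoint_Ioi le_rfl),
          Ioc_union_Ioi_eq_Ioi hapos.le]
    _ ≤ ENNReal.ofReal a + ENNReal.ofReal (K ^ θ * (θ / (1 - θ))) := by
        apply add_le_add
        · calc ∫⁻ x in Ioc 0 a, min 1 (ENNReal.ofReal (K * x ^ (-θ⁻¹)))
              ≤ ∫⁻ _ in Ioc 0 a, 1 := lintegral_mono fun x => min_le_left _ _
            _ = volume (Ioc (0:ℝ) a) := setLIntegral_one _
            _ = ENNReal.ofReal a := by rw [Real.volume_Ioc, sub_zero]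
        · calc ∫⁻ x in Ioi a, min 1 (ENNReal.ofReal (K * x ^ (-θ⁻¹)))
              ≤ ∫⁻ x in Ioi a, ENNReal.ofReal (K * x ^ (-θ⁻¹)) :=
                lintegral_mono fun x => min_le_right _ _
            _ = ENNReal.ofReal (∫ x in Ioi a, K * x ^ (-θ⁻¹)) := by
                rw [← ofReal_integral_eq_lintegral_ofReal hintOn ?_]
                filter_upwards [ae_restrict_mem measurableSet_Ioi] with x hx
                exact mul_nonneg hKpos.le
                  (Real.rpow_nonneg (le_of_lt (lt_trans hapos hx)) _)
            _ = ENNReal.ofReal (K ^ θ * (θ / (1 - θ))) := by rw [hval2]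
    _ = ENNReal.ofReal (a + K ^ θ * (θ / (1 - θ))) :=
        (ENNReal.ofReal_add hapos.le (by positivity)).symm
    _ = ENNReal.ofReal ((1 / (1 - θ)) * (2 * c * Real.Gamma (σ + 1)) ^ θ *
        t ^ (-(σ * θ))) := by
        congr 1
        rw [ha, hK, Real.mul_rpow (by positivity) htσ.le, ← Real.rpow_mul ht.le,
          show -σ * θ = -(σ * θ) by ring]
        field_simp
        ring


end
end

section
/- Tail bound for subordinators with polynomially bounded Bernstein function: Let S be a subordinator whose Bernstein function φ satisfies φ(r) ≤ c r^σ for all r>0, for some constants c>0, σ>0. Then for all s,t>0, P(S(s) ≥ t) ≤ 2cΓ(σ+1) s t^{−σ}. -/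
open MeasureTheory ProbabilityTheory Real Set Filter Topology

noncomputable section

/-- `∫₀^∞ (1 - e^{-br}) e^{-r} dr = b/(1+b)` for `b ≥ 0`. -/
lemma lintegral_one_sub_exp_mul {b : ℝ} (hb : 0 ≤ b) :
    ∫⁻ r in Ioi (0:ℝ), ENNReal.ofReal ((1 - Real.exp (-(b * r))) * Real.exp (-r)) =
      ENNReal.ofReal (b / (1 + b)) := by
  have h1b : (0:ℝ) < 1 + b := by linarith
  have hint1 : IntegrableOn (fun r : ℝ => Real.exp (-r)) (Ioi 0) := by
    simpa using exp_neg_integrableOn_Ioi 0 one_pos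
  have hint2 : IntegrableOn (fun r : ℝ => Real.exp (-(1 + b) * r)) (Ioi 0) :=
    exp_neg_integrableOn_Ioi 0 h1b
  have heq : ∀ r : ℝ, (1 - Real.exp (-(b * r))) * Real.exp (-r)
      = Real.exp (-r) - Real.exp (-(1 + b) * r) := by
    intro r
    rw [sub_mul, one_mul, ← Real.exp_add]
    congr 2
    ring
  have hint : IntegrableOn (fun r : ℝ => (1 - Real.exp (-(b * r))) * Real.exp (-r)) (Ioi 0) :=
    IntegrableOn.congr_fun (hint1.sub hint2) (fun r _ => (heq r).symm) measurableSet_Ioi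
  have hnn : 0 ≤ᵐ[volume.restrict (Ioi (0:ℝ))]
      fun r : ℝ => (1 - Real.exp (-(b * r))) * Real.exp (-r) := by
    filter_upwards [ae_restrict_mem measurableSet_Ioi] with r hr
    have h1 : Real.exp (-(b * r)) ≤ 1 := Real.exp_le_one_iff.mpr (by nlinarith [le_of_lt (mem_Ioi.mp hr)])
    have h2 := (Real.exp_pos (-r)).le
    simp only [Pi.zero_apply]
    nlinarith
  rw [← ofReal_integral_eq_lintegral_ofReal hint hnn]
  congr 1
  have hcomp := integral_comp_mul_left_Ioi (fun y : ℝ => Real.exp (-y)) 0 h1b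
  simp only [mul_zero, integral_exp_neg_Ioi, neg_zero, Real.exp_zero, smul_eq_mul, mul_one,
    ← neg_mul] at hcomp
  calc ∫ r in Ioi (0:ℝ), (1 - Real.exp (-(b * r))) * Real.exp (-r)
      = ∫ r in Ioi (0:ℝ), (Real.exp (-r) - Real.exp (-(1 + b) * r)) :=
        setIntegral_congr_fun measurableSet_Ioi (fun r _ => heq r)
    _ = (∫ r in Ioi (0:ℝ), Real.exp (-r)) - ∫ r in Ioi (0:ℝ), Real.exp (-(1 + b) * r) :=
        integral_sub hint1 hint2
    _ = 1 - (1 + b)⁻¹ := by rw [integral_exp_neg_Ioi_zero, hcomp]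
    _ = b / (1 + b) := by field_simp; ring

/-- **Tail bound for subordinators with polynomially bounded Bernstein function** (first part
of the proof of Lemma 3.6): if `S` is a subordinator whose Bernstein function `φ` satisfies
`φ(r) ≤ c r^σ` for all `r>0`, then for all `s,t>0`,
`P(S(s) ≥ t) ≤ 2cΓ(σ+1) s t^{−σ}`. -/
theorem tail_bound_subordinator
    {Ω : Type*} [MeasurableSpace Ω] (μ : Measure Ω) [IsProbabilityMeasure μ]
    (S : ℝ → Ω → ℝ) (φ : ℝ → ℝ) (hsub : IsSubordinator μ S φ)
    (c σ : ℝ) (hc : 0 < c) (hσ : 0 < σ) (hφ : ∀ r > (0:ℝ), φ r ≤ c * r ^ σ)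
    (s t : ℝ) (hs : 0 < s) (ht : 0 < t) :
    μ {ω | t ≤ S s ω} ≤
      ENNReal.ofReal (2 * c * Real.Gamma (σ + 1) * s * t ^ (-σ)) := by
  have hXm : Measurable (S s) := hsub.measurable s
  have hX0 : ∀ ω, 0 ≤ S s ω := fun ω => hsub.nonneg ω s hs.le
  -- key Laplace-transform bound
  have key : ∀ a : ℝ, 0 < a →
      ∫⁻ ω, ENNReal.ofReal (1 - Real.exp (-(a * S s ω))) ∂μ
        ≤ ENNReal.ofReal (s * (c * a ^ σ)) := by
    intro a ha
    have hmeas : Measurable fun ω => Real.exp (-(a * S s ω)) := (hXm.const_mul a).neg.exp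
    have hle1 : ∀ ω, Real.exp (-(a * S s ω)) ≤ 1 := fun ω =>
      Real.exp_le_one_iff.mpr (by nlinarith [hX0 ω, ha.le])
    have hie : Integrable (fun ω => Real.exp (-(a * S s ω))) μ := by
      refine Integrable.mono' (integrable_const 1) hmeas.aestronglyMeasurable ?_
      filter_upwards with ω
      rw [Real.norm_eq_abs, abs_of_pos (Real.exp_pos _)]
      exact hle1 ω
    have hi1 : Integrable (fun ω => 1 - Real.exp (-(a * S s ω))) μ :=
      (integrable_const 1).sub hie
    have hnn : 0 ≤ᵐ[μ] fun ω => 1 - Real.exp (-(a * S s ω)) := by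
      filter_upwards with ω
      simp only [Pi.zero_apply]
      linarith [hle1 ω]
    rw [← ofReal_integral_eq_lintegral_ofReal hi1 hnn]
    apply ENNReal.ofReal_le_ofReal
    rw [integral_sub (integrable_const 1) hie, integral_const, probReal_univ,
      smul_eq_mul, one_mul, hsub.laplace a s ha hs.le]
    have h1 : 1 - Real.exp (-(s * φ a)) ≤ s * φ a := by
      nlinarith [Real.add_one_le_exp (-(s * φ a))]
    have h2 : s * φ a ≤ s * (c * a ^ σ) := mul_le_mul_of_nonneg_left (hφ a ha) hs.le
    linarith
  -- the two-variable integrand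
  set g : Ω → ℝ → ENNReal := fun ω r =>
    ENNReal.ofReal ((1 - Real.exp (-(S s ω / t * r))) * Real.exp (-r)) with hg
  have hgmeas : AEMeasurable (Function.uncurry g) (μ.prod (volume.restrict (Ioi (0:ℝ)))) := by
    have : Measurable fun p : Ω × ℝ =>
        ENNReal.ofReal ((1 - Real.exp (-(S s p.1 / t * p.2))) * Real.exp (-p.2)) :=
      ((measurable_const.sub
        ((((hXm.comp measurable_fst).div_const t).mul measurable_snd).neg.exp)).mul
        (measurable_snd.neg.exp)).ennreal_ofReal
    exact this.aemeasurable
  -- step 1: indicator bound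
  have step1 : μ {ω | t ≤ S s ω} ≤ ∫⁻ ω, ENNReal.ofReal (2 * (S s ω / (t + S s ω))) ∂μ := by
    have hms : MeasurableSet {ω | t ≤ S s ω} := measurableSet_le measurable_const hXm
    rw [← lintegral_indicator_one hms]
    refine lintegral_mono fun ω => ?_
    by_cases hω : ω ∈ {ω | t ≤ S s ω}
    · rw [Set.indicator_of_mem hω]
      refine ENNReal.one_le_ofReal.mpr ?_
      have h0 : 0 < t + S s ω := by have := hX0 ω; linarith
      rw [mul_div_assoc'] at *
      rw [le_div_iff₀ h0]
      have : t ≤ S s ω := hω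
      linarith
    · rw [Set.indicator_of_notMem hω]
      exact zero_le
  -- step 2: integral representation of x/(t+x)
  have step2 : ∀ ω, ENNReal.ofReal (2 * (S s ω / (t + S s ω)))
      = 2 * ∫⁻ r in Ioi (0:ℝ), g ω r := by
    intro ω
    have hb : 0 ≤ S s ω / t := div_nonneg (hX0 ω) ht.le
    have hrep : ∫⁻ r in Ioi (0:ℝ), g ω r
        = ENNReal.ofReal (S s ω / t / (1 + S s ω / t)) := lintegral_one_sub_exp_mul hb
    have hxt : S s ω / t / (1 + S s ω / t) = S s ω / (t + S s ω) := by
      have h0 : 0 < t + S s ω := by have := hX0 ω; linarith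
      field_simp
    rw [hrep, hxt, ENNReal.ofReal_mul (by norm_num : (0:ℝ) ≤ 2), ENNReal.ofReal_ofNat]
  -- gamma integral
  have hΓ : ∫⁻ r in Ioi (0:ℝ), ENNReal.ofReal (Real.exp (-r) * r ^ σ)
      = ENNReal.ofReal (Real.Gamma (σ + 1)) := by
    have hσ1 : (0:ℝ) < σ + 1 := by linarith
    have hconv : IntegrableOn (fun x : ℝ => Real.exp (-x) * x ^ σ) (Ioi 0) := by
      simpa using Real.GammaIntegral_convergent hσ1
    have hnn : 0 ≤ᵐ[volume.restrict (Ioi (0:ℝ))] fun x : ℝ => Real.exp (-x) * x ^ σ := by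
      filter_upwards [ae_restrict_mem measurableSet_Ioi] with r hr
      have hr' : (0:ℝ) < r := hr
      simp only [Pi.zero_apply]
      positivity
    rw [Real.Gamma_eq_integral hσ1, add_sub_cancel_right,
      ← ofReal_integral_eq_lintegral_ofReal hconv hnn]
  -- main chain
  calc μ {ω | t ≤ S s ω}
      ≤ ∫⁻ ω, ENNReal.ofReal (2 * (S s ω / (t + S s ω))) ∂μ := step1
    _ = 2 * ∫⁻ ω, (∫⁻ r in Ioi (0:ℝ), g ω r) ∂μ := by
        simp_rw [step2]
        rw [lintegral_const_mul' 2 _ (by norm_num)]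
    _ = 2 * ∫⁻ r in Ioi (0:ℝ), (∫⁻ ω, g ω r ∂μ) := by
        rw [lintegral_lintegral_swap hgmeas]
    _ ≤ 2 * ∫⁻ r in Ioi (0:ℝ),
          ENNReal.ofReal (s * (c * (r / t) ^ σ)) * ENNReal.ofReal (Real.exp (-r)) := by
        refine mul_le_mul_right (lintegral_mono_ae ?_) 2
        filter_upwards [ae_restrict_mem measurableSet_Ioi] with r hr
        have hrt : 0 < r / t := div_pos hr ht
        have hinner : ∫⁻ ω, g ω r ∂μ
            = (∫⁻ ω, ENNReal.ofReal (1 - Real.exp (-(r / t * S s ω))) ∂μ)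
              * ENNReal.ofReal (Real.exp (-r)) := by
          rw [← lintegral_mul_const' _ _ ENNReal.ofReal_ne_top]
          refine lintegral_congr fun ω => ?_
          simp only [hg]
          have harg : S s ω / t * r = r / t * S s ω := by ring
          rw [harg, ENNReal.ofReal_mul]
          have : Real.exp (-(r / t * S s ω)) ≤ 1 :=
            Real.exp_le_one_iff.mpr (by nlinarith [hX0 ω, hrt.le])
          linarith
        rw [hinner]
        exact mul_le_mul_left (key (r / t) hrt) _
    _ = 2 * (ENNReal.ofReal (s * c * t ^ (-σ)) *
          ∫⁻ r in Ioi (0:ℝ), ENNReal.ofReal (Real.exp (-r) * r ^ σ)) := by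
        congr 1
        rw [← lintegral_const_mul' _ _ ENNReal.ofReal_ne_top]
        refine setLIntegral_congr_fun measurableSet_Ioi (fun r hr => ?_)
        have hr' : (0:ℝ) < r := hr
        rw [← ENNReal.ofReal_mul (by positivity), ← ENNReal.ofReal_mul (by positivity)]
        congr 1
        have hdiv : (r / t) ^ σ = r ^ σ * t ^ (-σ) := by
          rw [Real.div_rpow (le_of_lt hr') ht.le, Real.rpow_neg ht.le, div_eq_mul_inv]
        rw [hdiv]
        ring
    _ = ENNReal.ofReal (2 * c * Real.Gamma (σ + 1) * s * t ^ (-σ)) := by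
        rw [hΓ, ← ENNReal.ofReal_mul (by positivity), ← ENNReal.ofReal_ofNat 2,
          ← ENNReal.ofReal_mul (by norm_num)]
        congr 1
        ring

end
end

section
/- Infinite exponential negative moments for inverse α-stable subordinators: Let S be a strictly increasing subordinator such that for some α∈(0,1) and some constant c>0, P(S(r) ≥ t) ≥ c (1 ∧ r t^{−α}) for all r,t>0 (as holds for the α-stable subordinator), and let Z(t) = S^{-1}(t) := inf{s≥0 : S(s)>t}. Then for all t>0, θ>0 and δ>0, E exp[δ Z(t)^{−θ}] = ∞. -/
open MeasureTheory ProbabilityTheory Real Set Filter Topology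

noncomputable section

/-- **Infinite exponential negative moments for inverse α-stable subordinators**
(Remark 3.8): if `S` is a strictly increasing subordinator whose tails satisfy
`P(S(r) ≥ t) ≥ c (1 ∧ r t^{−α})` for some `α ∈ (0,1)`, `c>0` (as holds for the α-stable
subordinator), and `Z(t) = S^{-1}(t) = inf{s ≥ 0 : S(s) > t}`, then for all `t>0`, `θ>0`
and `δ>0`, `E exp[δ Z(t)^{−θ}] = ∞`. -/
theorem exp_moment_inverse_stable_subordinator_infinite
    {Ω : Type*} [MeasurableSpace Ω] (μ : Measure Ω) [IsProbabilityMeasure μ]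
    (S : ℝ → Ω → ℝ) (φ : ℝ → ℝ) (hsub : IsSubordinator μ S φ)
    (hstrict : ∀ᵐ ω ∂μ, StrictMonoOn (fun t => S t ω) (Set.Ici 0))
    (α c : ℝ) (hα : α ∈ Set.Ioo (0:ℝ) 1) (hc : 0 < c)
    (htail_lower : ∀ r > (0:ℝ), ∀ t > (0:ℝ),
      ENNReal.ofReal (c * min 1 (r * t ^ (-α))) ≤ μ {ω | t ≤ S r ω})
    (t θ δ : ℝ) (ht : 0 < t) (hθ : 0 < θ) (hδ : 0 < δ) :
    ∫⁻ ω, ENNReal.ofReal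
        (Real.exp (δ * (sInf {s : ℝ | 0 ≤ s ∧ t < S s ω}) ^ (-θ))) ∂μ = ⊤ := by
  obtain ⟨hα0, hα1⟩ := hα
  apply ENNReal.eq_top_of_forall_nnreal_le
  intro M0
  set M : ℝ := (M0 : ℝ) + 1 with hM
  have hM0 : 0 < M := by positivity
  have key : ENNReal.ofReal M ≤ ∫⁻ ω, ENNReal.ofReal
      (Real.exp (δ * (sInf {s : ℝ | 0 ≤ s ∧ t < S s ω}) ^ (-θ))) ∂μ := by
    -- constants
    have htp : (0:ℝ) < t + 1 := by linarith
    have htpow : (0:ℝ) < (t+1) ^ (-α) := rpow_pos_of_pos htp _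
    have htpow1 : (t+1) ^ (-α) ≤ 1 :=
      rpow_le_one_of_one_le_of_nonpos (by linarith) (by linarith)
    set K : ℝ := c * (t+1) ^ (-α) / 2 with hK
    have hK0 : 0 < K := by positivity
    set n : ℕ := ⌈2/θ⌉₊ with hn
    have hnθ : 2 ≤ (n:ℝ) * θ := by
      have h1 : 2/θ ≤ (n:ℝ) := Nat.le_ceil _
      calc (2:ℝ) = 2/θ * θ := by field_simp
        _ ≤ (n:ℝ) * θ := by nlinarith
    set C : ℝ := K * δ ^ n / (n.factorial : ℝ) with hC
    have hC0 : 0 < C := by positivity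
    set r : ℝ := min 1 (C / M) with hr
    have hr0 : 0 < r := lt_min one_pos (by positivity)
    have hr1 : r ≤ 1 := min_le_left _ _
    have hrCM : r ≤ C / M := min_le_right _ _
    -- main analytic inequality : M ≤ exp(δ r^{-θ}) * (K * r)
    have hx0 : (0:ℝ) ≤ δ * r ^ (-θ) := by positivity
    have hexp1 : (δ * r ^ (-θ)) ^ n / (n.factorial : ℝ) ≤ Real.exp (δ * r ^ (-θ)) := by
      calc (δ * r ^ (-θ)) ^ n / (n.factorial : ℝ)
          ≤ ∑ i ∈ Finset.range (n+1), (δ * r ^ (-θ)) ^ i / (i.factorial : ℝ) := by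
            apply Finset.single_le_sum (f := fun i => (δ * r ^ (-θ)) ^ i / (i.factorial : ℝ))
              (fun i _ => by positivity) (Finset.self_mem_range_succ n)
        _ ≤ _ := Real.sum_le_exp_of_nonneg hx0 _
    have hrpow : (r ^ (-θ)) ^ n = r ^ (-(θ * n)) := by
      rw [← Real.rpow_natCast (r ^ (-θ)) n, ← Real.rpow_mul hr0.le]
      ring_nf
    have hrr : r * r ^ (-(θ * n)) = r ^ (1 - θ * n) := by
      rw [show (1 - θ * (n:ℝ)) = 1 + -(θ * n) by ring, Real.rpow_add hr0, Real.rpow_one]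
    have hrbig : r ^ (-1 : ℝ) ≤ r ^ (1 - θ * n) := by
      apply Real.rpow_le_rpow_of_exponent_ge hr0 hr1
      linarith
    have hMle : M ≤ Real.exp (δ * r ^ (-θ)) * (K * r) := by
      have h1 : M ≤ C * r ^ (-1 : ℝ) := by
        rw [Real.rpow_neg_one, ← div_eq_mul_inv, le_div_iff₀ hr0]
        have hrM : r * M ≤ C := (le_div_iff₀ hM0).mp hrCM
        nlinarith
      have h2 : C * r ^ (-1:ℝ) ≤ C * r ^ (1 - θ * n) :=
        mul_le_mul_of_nonneg_left hrbig hC0.le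
      have h3 : C * r ^ (1 - θ * n) = (δ * r ^ (-θ)) ^ n / (n.factorial:ℝ) * (K * r) := by
        rw [mul_pow, hrpow, hC]
        field_simp
        ring_nf
        rw [← hrr]
        ring
      have h4 : (δ * r ^ (-θ)) ^ n / (n.factorial:ℝ) * (K * r)
          ≤ Real.exp (δ * r ^ (-θ)) * (K * r) :=
        mul_le_mul_of_nonneg_right hexp1 (by positivity)
      linarith
    -- tail event A
    have hAineq : ENNReal.ofReal (2 * (K * r)) ≤ μ {ω | t + 1 ≤ S r ω} := by
      have := htail_lower r hr0 (t+1) htp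
      have hmin : min 1 (r * (t+1) ^ (-α)) = r * (t+1) ^ (-α) :=
        min_eq_right (by nlinarith)
      rw [hmin] at this
      convert this using 2
      rw [hK]; ring
    -- choice of r'
    have hexp_t : Real.exp (-t) < 1 := Real.exp_lt_one_iff.mpr (by linarith)
    set ε : ℝ := (1 - Real.exp (-t)) * (K * r) with hε
    have hε0 : 0 < ε := by
      apply mul_pos (by linarith) (by positivity)
    have hcont : ContinuousAt (fun u : ℝ => 1 - Real.exp (-(u * φ 1))) 0 := by
      fun_prop
    have h1ev : ∀ᶠ u in 𝓝 (0:ℝ), 1 - Real.exp (-(u * φ 1)) < ε := by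
      have hf0 : (fun u : ℝ => 1 - Real.exp (-(u * φ 1))) 0 = 0 := by simp
      have := hcont (Iio_mem_nhds (show (fun u : ℝ => 1 - Real.exp (-(u * φ 1))) 0 < ε by
        rw [hf0]; exact hε0))
      exact this
    have h2ev : ∀ᶠ u in 𝓝 (0:ℝ), u < r := Iio_mem_nhds hr0
    have hev : ∀ᶠ u in 𝓝[>] (0:ℝ),
        (1 - Real.exp (-(u * φ 1)) < ε ∧ u < r) ∧ 0 < u :=
      (((h1ev.and h2ev).filter_mono nhdsWithin_le_nhds).and self_mem_nhdsWithin)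
    obtain ⟨r', ⟨hr'ε, hr'r⟩, hr'0⟩ := hev.exists
    -- events
    set A : Set Ω := {ω | t + 1 ≤ S r ω} with hA
    set B : Set Ω := {ω | t ≤ S r' ω} with hB
    have hAm : MeasurableSet A := measurableSet_le measurable_const (hsub.measurable r)
    have hBm : MeasurableSet B := measurableSet_le measurable_const (hsub.measurable r')
    -- Markov bound for μ B
    set X : Ω → ℝ := fun ω => Real.exp (-(1 * S r' ω)) with hX
    have hXmeas : Measurable X := ((hsub.measurable r').const_mul 1).neg.exp
    have hXle1 : ∀ ω, X ω ≤ 1 := fun ω => by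
      rw [hX]
      apply Real.exp_le_one_iff.mpr
      have := hsub.nonneg ω r' hr'0.le
      linarith
    have hXint : Integrable X μ :=
      (integrable_const 1).mono' hXmeas.aestronglyMeasurable
        (ae_of_all _ fun ω => by
          rw [Real.norm_eq_abs, abs_of_pos (Real.exp_pos _)]
          exact hXle1 ω)
    have hlap : ∫ ω, X ω ∂μ = Real.exp (-(r' * φ 1)) := hsub.laplace 1 r' one_pos hr'0.le
    have hBsub : (1 - Real.exp (-t)) * (μ B).toReal ≤ 1 - Real.exp (-(r' * φ 1)) := by
      have step1 : (1 - Real.exp (-t)) * (μ B).toReal = ∫ _ω in B, (1 - Real.exp (-t)) ∂μ := by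
        rw [setIntegral_const, smul_eq_mul, measureReal_def]; ring
      have step2 : ∫ _ω in B, (1 - Real.exp (-t)) ∂μ ≤ ∫ ω in B, (1 - X ω) ∂μ := by
        apply setIntegral_mono_on (integrableOn_const (measure_lt_top μ B).ne)
          ((integrable_const 1).sub hXint).integrableOn hBm
        intro ω hω
        have hSt : t ≤ S r' ω := hω
        have : X ω ≤ Real.exp (-t) := by
          rw [hX]
          apply Real.exp_le_exp.mpr
          linarith
        show 1 - Real.exp (-t) ≤ 1 - X ω
        linarith
      have step3 : ∫ ω in B, (1 - X ω) ∂μ ≤ ∫ ω, (1 - X ω) ∂μ :=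
        setIntegral_le_integral ((integrable_const 1).sub hXint)
          (ae_of_all _ fun ω => by have := hXle1 ω; simp; linarith)
      have step4 : ∫ ω, (1 - X ω) ∂μ = 1 - Real.exp (-(r' * φ 1)) := by
        rw [integral_sub (integrable_const 1) hXint, hlap, integral_const, probReal_univ]
        simp
      linarith
    have hBle : μ B ≤ ENNReal.ofReal (K * r) := by
      have h2 : (μ B).toReal ≤ K * r := by
        have h3 : (1 - Real.exp (-t)) * (μ B).toReal ≤ (1 - Real.exp (-t)) * (K * r) := by
          rw [← hε]; linarith
        exact le_of_mul_le_mul_left h3 (by linarith)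
      calc μ B = ENNReal.ofReal (μ B).toReal := (ENNReal.ofReal_toReal (measure_ne_top μ B)).symm
        _ ≤ _ := ENNReal.ofReal_le_ofReal h2
    -- lower bound on μ (A \ B)
    have hAB : ENNReal.ofReal (K * r) ≤ μ (A \ B) := by
      have hsplit : μ A ≤ μ (A ∩ B) + μ (A \ B) := measure_le_inter_add_diff μ A B
      have h4 : ENNReal.ofReal (K * r) + ENNReal.ofReal (K * r)
          ≤ ENNReal.ofReal (K * r) + μ (A \ B) := by
        calc ENNReal.ofReal (K * r) + ENNReal.ofReal (K * r)
            = ENNReal.ofReal (2 * (K * r)) := by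
              rw [← ENNReal.ofReal_add (by positivity) (by positivity)]; ring_nf
          _ ≤ μ A := hAineq
          _ ≤ μ (A ∩ B) + μ (A \ B) := hsplit
          _ ≤ ENNReal.ofReal (K * r) + μ (A \ B) :=
              add_le_add_left ((measure_mono inter_subset_right).trans hBle) _
      exact (ENNReal.add_le_add_iff_left ENNReal.ofReal_ne_top).mp h4
    -- pointwise bound
    set g : Ω → ENNReal := (A \ B).indicator
        (fun _ => ENNReal.ofReal (Real.exp (δ * r ^ (-θ)))) with hg
    have hgle : ∀ ω, g ω ≤ ENNReal.ofReal
        (Real.exp (δ * (sInf {s : ℝ | 0 ≤ s ∧ t < S s ω}) ^ (-θ))) := by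
      intro ω
      by_cases hω : ω ∈ A \ B
      · rw [hg, indicator_of_mem hω]
        obtain ⟨hωA, hωB⟩ := hω
        have hωA' : t + 1 ≤ S r ω := hωA
        have hωB' : ¬ (t ≤ S r' ω) := hωB
        set Zω := sInf {s : ℝ | 0 ≤ s ∧ t < S s ω} with hZ
        have hmemr : r ∈ {s : ℝ | 0 ≤ s ∧ t < S s ω} := ⟨hr0.le, by linarith⟩
        have hbdd : BddBelow {s : ℝ | 0 ≤ s ∧ t < S s ω} := ⟨0, fun s hs => hs.1⟩
        have hZr : Zω ≤ r := csInf_le hbdd hmemr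
        have hZr' : r' ≤ Zω := by
          apply le_csInf ⟨r, hmemr⟩
          intro s hs
          by_contra hcon
          push_neg at hcon
          have hmle : S s ω ≤ S r' ω := hsub.mono ω hs.1 hr'0.le hcon.le
          exact hωB' (by linarith [hs.2])
        have hZ0 : 0 < Zω := lt_of_lt_of_le hr'0 hZr'
        apply ENNReal.ofReal_le_ofReal
        apply Real.exp_le_exp.mpr
        apply mul_le_mul_of_nonneg_left _ hδ.le
        exact Real.rpow_le_rpow_of_nonpos hZ0 hZr (by linarith)
      · rw [hg, indicator_of_notMem hω]; exact zero_le
    calc ENNReal.ofReal M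
        ≤ ENNReal.ofReal (Real.exp (δ * r ^ (-θ)) * (K * r)) := ENNReal.ofReal_le_ofReal hMle
      _ = ENNReal.ofReal (Real.exp (δ * r ^ (-θ))) * ENNReal.ofReal (K * r) :=
          ENNReal.ofReal_mul (Real.exp_pos _).le
      _ ≤ ENNReal.ofReal (Real.exp (δ * r ^ (-θ))) * μ (A \ B) := mul_le_mul_right hAB _
      _ = ∫⁻ ω, g ω ∂μ := (lintegral_indicator_const (hAm.diff hBm) _).symm
      _ ≤ _ := lintegral_mono hgle
  calc (M0 : ENNReal) = ENNReal.ofReal (M0 : ℝ) := by simp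
    _ ≤ ENNReal.ofReal M := ENNReal.ofReal_le_ofReal (by rw [hM]; linarith)
    _ ≤ _ := key


end
end
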